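/- Let C be a class of matrices containing a matrix with some entry of absolute value at least 2. Then there exists a matrix M ∈ C, say of size d, such that λ_{n+1}(M) ≥ 2·λ_n(M) for every n ∈ ℕ, where λ_ℓ(M) = (M^ℓ·e₁)(1) and e₁ ∈ ℤ^d is the first standard basis vector. -/

import Mathlib

/-- The permutation matrix of a permutation `σ`: its `(i, j)` entry is `1` iff `i = σ j`. -/
def permMat {m : ℕ} (σ : Equiv.Perm (Fin m)) : Matrix (Fin m) (Fin m) ℤ :=
  Matrix.of fun i j => if i = σ j then 1 else 0

/-- `extMat A n` is the block-diagonal matrix `diag(A, I_n)`. -/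
def extMat {k : ℕ} (A : Matrix (Fin k) (Fin k) ℤ) (n : ℕ) :
    Matrix (Fin (k + n)) (Fin (k + n)) ℤ :=
  Matrix.reindex finSumFinEquiv finSumFinEquiv
    (Matrix.fromBlocks A 0 0 (1 : Matrix (Fin n) (Fin n) ℤ))

/-- A *class of matrices*: a set of square integer matrices of arbitrary sizes, closed
under conjugation by permutation matrices, extension by identity blocks, containing all
identity matrices, and closed under products of equal-size matrices. -/
structure MatrixClass where
  carrier : ∀ k : ℕ, Set (Matrix (Fin k) (Fin k) ℤ)
  perm_mem : ∀ {k : ℕ} (A : Matrix (Fin k) (Fin k) ℤ), A ∈ carrier k →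
    ∀ σ : Equiv.Perm (Fin k), permMat σ * A * permMat σ⁻¹ ∈ carrier k
  ext_mem : ∀ {k : ℕ} (A : Matrix (Fin k) (Fin k) ℤ), A ∈ carrier k →
    ∀ n : ℕ, 1 ≤ n → extMat A n ∈ carrier (k + n)
  one_mem : ∀ n : ℕ, 1 ≤ n → (1 : Matrix (Fin n) (Fin n) ℤ) ∈ carrier n
  mul_mem : ∀ {k : ℕ} (A B : Matrix (Fin k) (Fin k) ℤ),
    A ∈ carrier k → B ∈ carrier k → A * B ∈ carrier k

set_option maxHeartbeats 1600000

namespace Doubling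

open Matrix

lemma permMat_mul (m : ℕ) (σ : Equiv.Perm (Fin m)) (M : Matrix (Fin m) (Fin m) ℤ) :
    permMat σ * M = M.submatrix σ.symm id := by
  ext r c
  simp only [permMat, Matrix.mul_apply, Matrix.of_apply, Matrix.submatrix_apply, id_eq]
  rw [Finset.sum_eq_single (σ.symm r)]
  · simp
  · intro b _ hb
    rw [if_neg, zero_mul]
    intro h
    exact hb (by simp [h])
  · simp

lemma mul_permMat (m : ℕ) (σ : Equiv.Perm (Fin m)) (M : Matrix (Fin m) (Fin m) ℤ) :
    M * permMat σ⁻¹ = M.submatrix id σ.symm := by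
  ext r c
  simp only [permMat, Matrix.mul_apply, Matrix.of_apply, Matrix.submatrix_apply, id_eq]
  rw [Finset.sum_eq_single ((σ⁻¹ : Equiv.Perm (Fin m)) c)]
  · rw [if_pos rfl, mul_one]; rfl
  · intro b _ hb
    rw [if_neg, mul_zero]
    intro h; exact hb h
  · simp

lemma conj_eq_reindex (m : ℕ) (σ : Equiv.Perm (Fin m)) (M : Matrix (Fin m) (Fin m) ℤ) :
    permMat σ * M * permMat σ⁻¹ = Matrix.reindex σ σ M := by
  rw [permMat_mul, mul_permMat]
  ext r c
  simp [Matrix.submatrix_apply, Matrix.reindex_apply]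

variable (C : MatrixClass)

lemma mem_reindex {a b : ℕ} {M : Matrix (Fin a) (Fin a) ℤ} (hM : M ∈ C.carrier a)
    (e : Fin a ≃ Fin b) : Matrix.reindex e e M ∈ C.carrier b := by
  have hab : a = b := by simpa using Fintype.card_congr e
  subst hab
  have := C.perm_mem M hM e
  rwa [conj_eq_reindex] at this

/-- membership for matrices over an arbitrary finite index type. -/
def CMem {ι : Type} [Fintype ι] [DecidableEq ι] (M : Matrix ι ι ℤ) : Prop :=
  ∃ (n : ℕ) (e : ι ≃ Fin n), Matrix.reindex e e M ∈ C.carrier n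

lemma CMem.ofMem {n : ℕ} {M : Matrix (Fin n) (Fin n) ℤ} (h : M ∈ C.carrier n) : CMem C M :=
  ⟨n, Equiv.refl _, by simpa using h⟩

lemma reindex_comp {ι₁ ι₂ ι₃ : Type} (f : ι₁ ≃ ι₂) (g : ι₂ ≃ ι₃) (M : Matrix ι₁ ι₁ ℤ) :
    Matrix.reindex g g (Matrix.reindex f f M) = Matrix.reindex (f.trans g) (f.trans g) M := by
  ext r c
  simp [Matrix.reindex_apply, Matrix.submatrix_apply]

lemma CMem.reindex {ι ι' : Type} [Fintype ι] [DecidableEq ι] [Fintype ι'] [DecidableEq ι']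
    {M : Matrix ι ι ℤ} (h : CMem C M) (f : ι ≃ ι') : CMem C (Matrix.reindex f f M) := by
  obtain ⟨n, e, he⟩ := h
  refine ⟨n, f.symm.trans e, ?_⟩
  rw [reindex_comp, show f.trans (f.symm.trans e) = e from by ext x; simp]
  exact he

lemma CMem.mul {ι : Type} [Fintype ι] [DecidableEq ι]
    {M N : Matrix ι ι ℤ} (hM : CMem C M) (hN : CMem C N) : CMem C (M * N) := by
  obtain ⟨n, e, he⟩ := hM
  obtain ⟨n', e', he'⟩ := hN
  refine ⟨n, e, ?_⟩
  have h2 : Matrix.reindex e e N ∈ C.carrier n := by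
    have h5 : Matrix.reindex e e N =
        Matrix.reindex (e'.symm.trans e) (e'.symm.trans e) (Matrix.reindex e' e' N) := by
      rw [reindex_comp, show e'.trans (e'.symm.trans e) = e from by ext x; simp]
    rw [h5]
    exact mem_reindex C he' _
  have h4 : Matrix.reindex e e M * Matrix.reindex e e N = Matrix.reindex e e (M * N) := by
    simp only [Matrix.reindex_apply]
    exact Matrix.submatrix_mul_equiv M N _ e.symm _
  have h3 := C.mul_mem _ _ he h2
  rwa [h4] at h3

lemma CMem.one {ι : Type} [Fintype ι] [DecidableEq ι] [Nonempty ι] :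
    CMem C (1 : Matrix ι ι ℤ) := by
  refine ⟨Fintype.card ι, Fintype.equivFin ι, ?_⟩
  rw [Matrix.reindex_apply, Matrix.submatrix_one_equiv]
  exact C.one_mem _ (by have := Fintype.card_pos (α := ι); omega)

/-- block matrices `fromBlocks B 0 0 1` over arbitrary finite second type. -/
lemma CMem.extBlocks {K : ℕ} {B : Matrix (Fin K) (Fin K) ℤ} (hB : B ∈ C.carrier K)
    (κ : Type) [Fintype κ] [DecidableEq κ] [Nonempty κ] :
    CMem C (Matrix.fromBlocks B 0 0 (1 : Matrix κ κ ℤ)) := by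
  classical
  set n := Fintype.card κ
  have hn : 1 ≤ n := Fintype.card_pos
  set f := Fintype.equivFin κ
  refine ⟨K + n, (Equiv.sumCongr (Equiv.refl (Fin K)) f).trans finSumFinEquiv, ?_⟩
  have key : Matrix.reindex ((Equiv.sumCongr (Equiv.refl (Fin K)) f).trans finSumFinEquiv)
      ((Equiv.sumCongr (Equiv.refl (Fin K)) f).trans finSumFinEquiv)
      (Matrix.fromBlocks B 0 0 (1 : Matrix κ κ ℤ)) = extMat B n := by
    unfold extMat
    ext r c
    simp only [Matrix.reindex_apply, Matrix.submatrix_apply, Equiv.symm_trans_apply,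
      Equiv.sumCongr_symm, Equiv.sumCongr_apply, Equiv.refl_symm]
    rcases h1 : finSumFinEquiv.symm r with x | x <;> rcases h2 : finSumFinEquiv.symm c with y | y <;>
      simp [Matrix.fromBlocks, Matrix.one_apply, EmbeddingLike.apply_eq_iff_eq]
  rw [key]
  exact C.ext_mem B hB n hn


lemma CMem.to_zero {ι : Type} [Fintype ι] [DecidableEq ι] {M : Matrix ι ι ℤ}
    (hM : CMem C M) (h : ι) :
    ∃ (K : ℕ) (hK : 0 < K) (B : Matrix (Fin K) (Fin K) ℤ),
      B ∈ C.carrier K ∧ B ⟨0, hK⟩ ⟨0, hK⟩ = M h h := by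
  obtain ⟨n, e, he⟩ := hM
  have hn : 0 < n := by
    have : Nonempty (Fin n) := ⟨e h⟩
    exact Fin.pos ((e h))
  set σ : Equiv.Perm (Fin n) := Equiv.swap (e h) ⟨0, hn⟩ with hσ
  refine ⟨n, hn, Matrix.reindex σ σ (Matrix.reindex e e M), mem_reindex C he σ, ?_⟩
  have h0 : σ.symm ⟨0, hn⟩ = e h := by
    simp [hσ, Equiv.symm_swap, Equiv.swap_apply_right]
  simp [Matrix.reindex_apply, Matrix.submatrix_apply, h0]

/-- involution on `Fin k ⊕ Fin k` sending `inl i ↔ inl j` and `inl v ↔ inr v` for other `v`. -/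
def phiYf {k : ℕ} (i j : Fin k) : (Fin k ⊕ Fin k) → (Fin k ⊕ Fin k) := fun z =>
  match z with
  | .inl v => if v = i then .inl j else if v = j then .inl i else .inr v
  | .inr v => if v = i ∨ v = j then .inr v else .inl v

def phiY {k : ℕ} (i j : Fin k) : (Fin k ⊕ Fin k) ≃ (Fin k ⊕ Fin k) where
  toFun := phiYf i j
  invFun := phiYf i j
  left_inv := by
    intro z
    rcases z with v | v <;> simp only [phiYf] <;> split_ifs <;> simp_all [phiYf] <;> tauto
  right_inv := by
    intro z
    rcases z with v | v <;> simp only [phiYf] <;> split_ifs <;> simp_all [phiYf] <;> tauto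

lemma exists_bigdiag
    (h : ∃ (k : ℕ) (A : Matrix (Fin k) (Fin k) ℤ), A ∈ C.carrier k ∧
      ∃ (i j : Fin k), 2 ≤ |A i j|) :
    ∃ (K : ℕ) (hK : 0 < K) (B : Matrix (Fin K) (Fin K) ℤ),
      B ∈ C.carrier K ∧ 2 ≤ |B ⟨0, hK⟩ ⟨0, hK⟩| := by
  obtain ⟨k, A, hA, i, j, hij⟩ := h
  by_cases hii : 2 ≤ |A i i|
  · obtain ⟨K, hK, B, hB, hBe⟩ := CMem.to_zero C (CMem.ofMem C hA) i
    exact ⟨K, hK, B, hB, by rw [hBe]; exact hii⟩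
  by_cases hjj : 2 ≤ |A j j|
  · obtain ⟨K, hK, B, hB, hBe⟩ := CMem.to_zero C (CMem.ofMem C hA) j
    exact ⟨K, hK, B, hB, by rw [hBe]; exact hjj⟩
  -- now |A i i| ≤ 1, |A j j| ≤ 1, hence i ≠ j and the two-gate gadget works
  have hne : i ≠ j := by
    rintro rfl
    exact hii hij
  have hkn : Nonempty (Fin k) := ⟨i⟩
  set F : Matrix (Fin k ⊕ Fin k) (Fin k ⊕ Fin k) ℤ :=
    Matrix.fromBlocks A 0 0 (1 : Matrix (Fin k) (Fin k) ℤ) with hF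
  have hFmem : CMem C F := CMem.extBlocks C hA (Fin k)
  set G : Matrix (Fin k ⊕ Fin k) (Fin k ⊕ Fin k) ℤ := Matrix.reindex (phiY i j) (phiY i j) F
    with hG
  have hGmem : CMem C G := CMem.reindex C hFmem _
  have hBmem : CMem C (F * G) := CMem.mul C hFmem hGmem
  have hsymm : ∀ z, (phiY i j).symm z = phiYf i j z := fun z => rfl
  have hentry : (F * G) (Sum.inl i) (Sum.inl i) = A i i * A j j + A i j * A i j := by
    rw [Matrix.mul_apply, Fintype.sum_sum_type]
    have hz : ∀ u : Fin k, F (Sum.inl i) (Sum.inr u) * G (Sum.inr u) (Sum.inl i) = 0 := by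
      intro u
      simp [hF, Matrix.fromBlocks]
    rw [Finset.sum_congr rfl (fun u _ => hz u), Finset.sum_const_zero, add_zero]
    have hval : ∀ u : Fin k, F (Sum.inl i) (Sum.inl u) * G (Sum.inl u) (Sum.inl i)
        = (if u = i then A i i * A j j else 0) + (if u = j then A i j * A i j else 0) := by
      intro u
      have hGu : G (Sum.inl u) (Sum.inl i) = F (phiYf i j (Sum.inl u)) (phiYf i j (Sum.inl i)) := by
        rw [hG, Matrix.reindex_apply, Matrix.submatrix_apply, hsymm, hsymm]
      rw [hGu]
      by_cases hu1 : u = i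
      · subst hu1
        simp [phiYf, hne, hF, Matrix.fromBlocks]
      by_cases hu2 : u = j
      · subst hu2
        simp [phiYf, hne, hu1, hF, Matrix.fromBlocks]
      · simp [phiYf, hu1, hu2, hF, Matrix.fromBlocks]
    rw [Finset.sum_congr rfl (fun u _ => hval u), Finset.sum_add_distrib]
    rw [Finset.sum_ite_eq' Finset.univ i (fun _ => A i i * A j j),
      Finset.sum_ite_eq' Finset.univ j (fun _ => A i j * A i j)]
    simp
  obtain ⟨K, hK, B, hB, hBe⟩ := CMem.to_zero C hBmem (Sum.inl i)
  refine ⟨K, hK, B, hB, ?_⟩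
  rw [hBe, hentry]
  have h1 : |A i i * A j j| ≤ 1 := by
    rw [abs_mul]
    have := abs_nonneg (A i i)
    have := abs_nonneg (A j j)
    nlinarith [hii, hjj]
  have h2 : (4 : ℤ) ≤ |A i j * A i j| := by
    rw [abs_mul]
    nlinarith [hij]
  have htri : |A i j * A i j| - |A i i * A j j| ≤ |A i i * A j j + A i j * A i j| := by
    have h3 := abs_sub_abs_le_abs_sub (A i j * A i j) (-(A i i * A j j))
    have h4 : A i j * A i j - -(A i i * A j j) = A i i * A j j + A i j * A i j := by ring
    rw [h4, abs_neg] at h3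
    exact h3
  linarith


section Gadget

variable (K' : ℕ) (B : Matrix (Fin (K'+1)) (Fin (K'+1)) ℤ) (L' : ℕ)

/-- The gate with hub at `Sum.inl ()` and block `ℓ`. -/
def gateF (ℓ : Fin (L'+1)) :
    Matrix (Unit ⊕ (Fin (L'+1) × Fin K')) (Unit ⊕ (Fin (L'+1) × Fin K')) ℤ :=
  Matrix.of fun z w =>
    match z, w with
    | Sum.inl _, Sum.inl _ => B 0 0
    | Sum.inl _, Sum.inr mv => if mv.1 = ℓ then B 0 mv.2.succ else 0
    | Sum.inr mu, Sum.inl _ => if mu.1 = ℓ then B mu.2.succ 0 else 0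
    | Sum.inr mu, Sum.inr mv =>
        if mu.1 = ℓ then (if mv.1 = ℓ then B mu.2.succ mv.2.succ else 0)
        else (if mu.1 = mv.1 ∧ mu.2 = mv.2 then 1 else 0)

/-- The block-placing equivalence for gate `ℓ`. -/
def chiE (ℓ : Fin (L'+1)) :
    (Fin (K'+1) ⊕ (Fin L' × Fin K')) ≃ (Unit ⊕ (Fin (L'+1) × Fin K')) where
  toFun := Sum.elim (fun a => Fin.cases (Sum.inl ()) (fun u => Sum.inr (ℓ, u)) a)
    (fun mu => Sum.inr (ℓ + mu.1.succ, mu.2))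
  invFun := Sum.elim (fun _ => Sum.inl 0)
    (fun mu => Fin.cases (Sum.inl mu.2.succ) (fun m' => Sum.inr (m', mu.2)) (mu.1 - ℓ))
  left_inv := by
    rintro (a | ⟨m, u⟩)
    · induction a using Fin.cases with
      | zero => simp
      | succ u => simp [sub_self]
    · simp [add_sub_cancel_left]
  right_inv := by
    rintro (u | ⟨m, u⟩)
    · simp
    · rcases Fin.eq_zero_or_eq_succ (m - ℓ) with h | ⟨m₃, h⟩
      · have hm : m = ℓ := by
          have := sub_eq_zero.mp h
          exact this
        simp [h, hm]
      · have hm : ℓ + m₃.succ = m := by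
          rw [← h]
          exact add_sub_cancel ℓ m
        simp [h, hm]

lemma chi_symm_inl (ℓ : Fin (L'+1)) (t : Unit) :
    (chiE K' L' ℓ).symm (Sum.inl t) = Sum.inl 0 := rfl

lemma chi_symm_inr (ℓ : Fin (L'+1)) (m : Fin (L'+1)) (u : Fin K') :
    (chiE K' L' ℓ).symm (Sum.inr (m, u)) =
      Fin.cases (Sum.inl u.succ) (fun m' => Sum.inr (m', u)) (m - ℓ) := rfl

lemma gate_eq (ℓ : Fin (L'+1)) :
    gateF K' B L' ℓ = Matrix.reindex (chiE K' L' ℓ) (chiE K' L' ℓ)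
      (Matrix.fromBlocks B 0 0 (1 : Matrix (Fin L' × Fin K') (Fin L' × Fin K') ℤ)) := by
  have hsub : ∀ (m : Fin (L'+1)), m - ℓ ≠ 0 → m ≠ ℓ := by
    intro m hms hc
    rw [hc, sub_self] at hms
    exact hms rfl
  ext z w
  rw [Matrix.reindex_apply, Matrix.submatrix_apply]
  rcases z with t | ⟨m, u⟩ <;> rcases w with t' | ⟨m', v⟩ <;>
    simp only [chiE, Equiv.coe_fn_symm_mk, Sum.elim_inl, Sum.elim_inr]
  · rw [Matrix.fromBlocks_apply₁₁]
    rfl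
  · rcases Fin.eq_zero_or_eq_succ (m' - ℓ) with h | ⟨m₃, h⟩
    · have hm : m' = ℓ := sub_eq_zero.mp h
      rw [h, Fin.cases_zero, Matrix.fromBlocks_apply₁₁]
      simp [gateF, hm]
    · have hm : m' ≠ ℓ := hsub m' (by rw [h]; exact Fin.succ_ne_zero m₃)
      rw [h, Fin.cases_succ, Matrix.fromBlocks_apply₁₂]
      simp [gateF, hm]
  · rcases Fin.eq_zero_or_eq_succ (m - ℓ) with h | ⟨m₃, h⟩
    · have hm : m = ℓ := sub_eq_zero.mp h
      rw [h, Fin.cases_zero, Matrix.fromBlocks_apply₁₁]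
      simp [gateF, hm]
    · have hm : m ≠ ℓ := hsub m (by rw [h]; exact Fin.succ_ne_zero m₃)
      rw [h, Fin.cases_succ, Matrix.fromBlocks_apply₂₁]
      simp [gateF, hm]
  · rcases Fin.eq_zero_or_eq_succ (m - ℓ) with h | ⟨m₃, h⟩ <;>
      rcases Fin.eq_zero_or_eq_succ (m' - ℓ) with h' | ⟨m₃', h'⟩
    · have hm : m = ℓ := sub_eq_zero.mp h
      have hm' : m' = ℓ := sub_eq_zero.mp h'
      rw [h, h', Fin.cases_zero, Fin.cases_zero, Matrix.fromBlocks_apply₁₁]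
      simp [gateF, hm, hm']
    · have hm : m = ℓ := sub_eq_zero.mp h
      have hm' : m' ≠ ℓ := hsub m' (by rw [h']; exact Fin.succ_ne_zero m₃')
      rw [h, h', Fin.cases_zero, Fin.cases_succ, Matrix.fromBlocks_apply₁₂]
      simp [gateF, hm, hm']
    · have hm : m ≠ ℓ := hsub m (by rw [h]; exact Fin.succ_ne_zero m₃)
      have hm' : m' = ℓ := sub_eq_zero.mp h'
      rw [h, h', Fin.cases_succ, Fin.cases_zero, Matrix.fromBlocks_apply₂₁]
      have hmm' : ¬(m = m' ∧ u = v) := by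
        rintro ⟨hc, -⟩
        rw [hm'] at hc
        exact hm hc
      simp [gateF, hm, hmm']
    · have hm : m ≠ ℓ := hsub m (by rw [h]; exact Fin.succ_ne_zero m₃)
      rw [h, h', Fin.cases_succ, Fin.cases_succ, Matrix.fromBlocks_apply₂₂]
      have hiff : m₃ = m₃' ↔ m = m' := by
        constructor
        · intro hc
          have h9 : m - ℓ = m' - ℓ := by rw [h, h', hc]
          exact sub_left_inj.mp h9
        · intro hc
          have h9 : m₃.succ = m₃'.succ := by rw [← h, ← h', hc]
          exact Fin.succ_inj.mp h9
      simp only [gateF, Matrix.of_apply, if_neg hm, Matrix.one_apply]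
      by_cases hc : m = m' ∧ u = v
      · rw [if_pos hc, if_pos (by rw [Prod.ext_iff]; exact ⟨hiff.mpr hc.1, hc.2⟩)]
      · rw [if_neg hc, if_neg]
        intro hd
        rw [Prod.ext_iff] at hd
        exact hc ⟨hiff.mp hd.1, hd.2⟩

lemma gate_cmem (hB : B ∈ C.carrier (K'+1)) (hK' : 0 < K') (hL' : 0 < L')
    (ℓ : Fin (L'+1)) : CMem C (gateF K' B L' ℓ) := by
  rw [gate_eq]
  have : Nonempty (Fin L' × Fin K') := ⟨(⟨0, hL'⟩, ⟨0, hK'⟩)⟩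
  have hfb := CMem.extBlocks C hB (Fin L' × Fin K')
  have := CMem.reindex C hfb (chiE K' L' ℓ)
  exact this

/-- closed form of the partial products of gates. -/
def PF (t : ℕ) : Matrix (Unit ⊕ (Fin (L'+1) × Fin K')) (Unit ⊕ (Fin (L'+1) × Fin K')) ℤ :=
  Matrix.of fun z w =>
    match z, w with
    | Sum.inl _, Sum.inl _ => (B 0 0)^t
    | Sum.inl _, Sum.inr mv =>
        if mv.1.val < t then (B 0 0)^(t - 1 - mv.1.val) * B 0 mv.2.succ else 0
    | Sum.inr lu, Sum.inl _ =>
        if lu.1.val < t then (B 0 0)^(lu.1.val) * B lu.2.succ 0 else 0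
    | Sum.inr lu, Sum.inr mv =>
        if mv.1.val < t then
          (if lu.1 = mv.1 then B lu.2.succ mv.2.succ
           else if mv.1.val < lu.1.val ∧ lu.1.val < t then
             (B 0 0)^(lu.1.val - 1 - mv.1.val) * (B lu.2.succ 0 * B 0 mv.2.succ)
           else 0)
        else (if lu.1 = mv.1 ∧ lu.2 = mv.2 then 1 else 0)

/-- the iterated product of the gates. -/
def Wmat : ℕ → Matrix (Unit ⊕ (Fin (L'+1) × Fin K')) (Unit ⊕ (Fin (L'+1) × Fin K')) ℤ
  | 0 => 1
  | (t+1) => (if h : t < L'+1 then gateF K' B L' ⟨t, h⟩ else 1) * Wmat t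

lemma sum_ite_block {n : ℕ} {β : Type} [Fintype β] (a : Fin n) (f : Fin n → β → ℤ) :
    (∑ m : Fin n, ∑ v : β, (if m = a then f m v else 0)) = ∑ v : β, f a v := by
  have h1 : ∀ m : Fin n, (∑ v : β, (if m = a then f m v else 0))
      = if m = a then (∑ v : β, f m v) else 0 := by
    intro m
    split_ifs <;> simp
  rw [Finset.sum_congr rfl (fun m _ => h1 m), Finset.sum_ite_eq' Finset.univ a _]
  simp

lemma Wform : ∀ t, t ≤ L'+1 → Wmat K' B L' t = PF K' B L' t := by
  intro t
  induction t with
  | zero =>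
    intro _
    ext z w
    rcases z with t₁ | ⟨ℓ, u⟩ <;> rcases w with t₂ | ⟨m, v⟩ <;>
      simp [Wmat, PF, Matrix.one_apply, Prod.ext_iff]
  | succ t ih =>
    intro ht
    have htL : t < L'+1 := by omega
    have hW : Wmat K' B L' (t+1) = gateF K' B L' ⟨t, htL⟩ * PF K' B L' t := by
      rw [show Wmat K' B L' (t+1)
          = (if h : t < L'+1 then gateF K' B L' ⟨t, h⟩ else 1) * Wmat K' B L' t from rfl,
        dif_pos htL, ih (by omega)]
    rw [hW]
    ext z w
    rw [Matrix.mul_apply, Fintype.sum_sum_type]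
    rcases z with t₁ | ⟨ℓ, u⟩
    · -- hub row
      have hrow : ∀ (m₁ : Fin (L'+1)) (v₁ : Fin K'),
          gateF K' B L' ⟨t, htL⟩ (Sum.inl t₁) (Sum.inr (m₁, v₁)) * PF K' B L' t (Sum.inr (m₁, v₁)) w
          = if m₁ = ⟨t, htL⟩ then B 0 v₁.succ * PF K' B L' t (Sum.inr (m₁, v₁)) w else 0 := by
        intro m₁ v₁
        simp only [gateF, Matrix.of_apply]
        split_ifs <;> simp
      have hsum1 : (∑ u_1 : Unit, gateF K' B L' ⟨t, htL⟩ (Sum.inl t₁) (Sum.inl u_1)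
          * PF K' B L' t (Sum.inl u_1) w) = B 0 0 * PF K' B L' t (Sum.inl ()) w := by
        simp [gateF]
      rw [hsum1, Fintype.sum_prod_type]
      rw [Finset.sum_congr rfl (fun m₁ _ => Finset.sum_congr rfl (fun v₁ _ => hrow m₁ v₁))]
      rw [sum_ite_block ⟨t, htL⟩ (fun m₁ v₁ => B 0 v₁.succ * PF K' B L' t (Sum.inr (m₁, v₁)) w)]
      rcases w with t₂ | ⟨m, v⟩
      · -- (hub, hub)
        have hz : ∀ v₁ : Fin K', B 0 v₁.succ * PF K' B L' t (Sum.inr ((⟨t, htL⟩ : Fin (L'+1)), v₁)) (Sum.inl t₂) = 0 := by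
          intro v₁
          simp [PF]
        rw [Finset.sum_congr rfl (fun v₁ _ => hz v₁), Finset.sum_const_zero, add_zero]
        simp [PF, pow_succ]
        ring
      · -- (hub, inr (m,v))
        rcases Nat.lt_trichotomy m.val t with hm | hm | hm
        · have hz : ∀ v₁ : Fin K', B 0 v₁.succ * PF K' B L' t (Sum.inr ((⟨t, htL⟩ : Fin (L'+1)), v₁)) (Sum.inr (m, v)) = 0 := by
            intro v₁
            have hne : ¬((⟨t, htL⟩ : Fin (L'+1)) = m) := by
              intro hc
              simp only [Fin.ext_iff, Fin.val_mk] at hc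
              omega
            have hne2 : ¬(m.val < t ∧ t < t) := by omega
            simp only [PF, Matrix.of_apply, if_pos hm, if_neg hne]
            rw [if_neg hne2, mul_zero]
          rw [Finset.sum_congr rfl (fun v₁ _ => hz v₁), Finset.sum_const_zero, add_zero]
          have h1 : m.val < t + 1 := by omega
          simp only [PF, Matrix.of_apply, if_pos hm, if_pos h1]
          have hexp : t + 1 - 1 - m.val = (t - 1 - m.val) + 1 := by omega
          rw [hexp, pow_succ]
          ring
        · -- m.val = t
          have hm2 : ¬(m.val < t) := by omega
          have hmeq : m = (⟨t, htL⟩ : Fin (L'+1)) := by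
            simp only [Fin.ext_iff, Fin.val_mk]
            simpa using hm
          have hz : PF K' B L' t (Sum.inl t₁) (Sum.inr (m, v)) = 0 := by
            simp [PF, hm2]
          rw [hz, mul_zero, zero_add]
          have hval : ∀ v₁ : Fin K', B 0 v₁.succ * PF K' B L' t (Sum.inr ((⟨t, htL⟩ : Fin (L'+1)), v₁)) (Sum.inr (m, v))
              = if v₁ = v then B 0 v₁.succ else 0 := by
            intro v₁
            simp only [PF, Matrix.of_apply, if_neg hm2]
            by_cases hv : v₁ = v
            · rw [if_pos ⟨hmeq.symm, hv⟩, if_pos hv, mul_one]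
            · rw [if_neg (by tauto), if_neg hv, mul_zero]
          rw [Finset.sum_congr rfl (fun v₁ _ => hval v₁), Finset.sum_ite_eq' Finset.univ v _]
          have h1 : m.val < t + 1 := by omega
          simp only [PF, Matrix.of_apply, if_pos h1]
          have hexp : t + 1 - 1 - m.val = 0 := by omega
          rw [hexp, pow_zero, one_mul]
          simp
        · -- m.val > t
          have hm2 : ¬(m.val < t) := by omega
          have hm3 : ¬(m.val < t + 1) := by omega
          have hne : ¬((⟨t, htL⟩ : Fin (L'+1)) = m ) := by
            intro hc
            simp only [Fin.ext_iff, Fin.val_mk] at hc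
            omega
          have hz : PF K' B L' t (Sum.inl t₁) (Sum.inr (m, v)) = 0 := by
            simp [PF, hm2]
          have hz2 : ∀ v₁ : Fin K', B 0 v₁.succ * PF K' B L' t (Sum.inr ((⟨t, htL⟩ : Fin (L'+1)), v₁)) (Sum.inr (m, v)) = 0 := by
            intro v₁
            simp only [PF, Matrix.of_apply, if_neg hm2]
            rw [if_neg (by tauto), mul_zero]
          rw [hz, mul_zero, zero_add, Finset.sum_congr rfl (fun v₁ _ => hz2 v₁),
            Finset.sum_const_zero]
          simp [PF, hm3]
          intro hle; omega
    · -- inr (ℓ,u) row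
      by_cases hℓ : ℓ = (⟨t, htL⟩ : Fin (L'+1))
      · subst hℓ
        have hsum1 : (∑ u_1 : Unit, gateF K' B L' ⟨t, htL⟩ (Sum.inr (⟨t, htL⟩, u)) (Sum.inl u_1)
            * PF K' B L' t (Sum.inl u_1) w) = B u.succ 0 * PF K' B L' t (Sum.inl ()) w := by
          simp [gateF]
        have hrow : ∀ (m₁ : Fin (L'+1)) (v₁ : Fin K'),
            gateF K' B L' ⟨t, htL⟩ (Sum.inr (⟨t, htL⟩, u)) (Sum.inr (m₁, v₁)) * PF K' B L' t (Sum.inr (m₁, v₁)) w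
            = if m₁ = ⟨t, htL⟩ then B u.succ v₁.succ * PF K' B L' t (Sum.inr (m₁, v₁)) w else 0 := by
          intro m₁ v₁
          simp only [gateF, Matrix.of_apply]
          split_ifs <;> simp_all
        rw [hsum1, Fintype.sum_prod_type]
        rw [Finset.sum_congr rfl (fun m₁ _ => Finset.sum_congr rfl (fun v₁ _ => hrow m₁ v₁))]
        rw [sum_ite_block ⟨t, htL⟩ (fun m₁ v₁ => B u.succ v₁.succ * PF K' B L' t (Sum.inr (m₁, v₁)) w)]
        rcases w with t₂ | ⟨m, v⟩
        · have hz : ∀ v₁ : Fin K', B u.succ v₁.succ * PF K' B L' t (Sum.inr ((⟨t, htL⟩ : Fin (L'+1)), v₁)) (Sum.inl t₂) = 0 := by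
            intro v₁
            simp [PF]
          rw [Finset.sum_congr rfl (fun v₁ _ => hz v₁), Finset.sum_const_zero, add_zero]
          simp only [PF, Matrix.of_apply]
          rw [if_pos (by omega : (t : ℕ) < t + 1)]
          ring
        · rcases Nat.lt_trichotomy m.val t with hm | hm | hm
          · have hz : ∀ v₁ : Fin K', B u.succ v₁.succ * PF K' B L' t (Sum.inr ((⟨t, htL⟩ : Fin (L'+1)), v₁)) (Sum.inr (m, v)) = 0 := by
              intro v₁
              have hne : ¬((⟨t, htL⟩ : Fin (L'+1)) = m) := by
                intro hc
                simp only [Fin.ext_iff, Fin.val_mk] at hc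
                omega
              have hne2 : ¬(m.val < t ∧ t < t) := by omega
              simp only [PF, Matrix.of_apply, if_pos hm, if_neg hne]
              rw [if_neg hne2, mul_zero]
            rw [Finset.sum_congr rfl (fun v₁ _ => hz v₁), Finset.sum_const_zero, add_zero]
            have h1 : m.val < t + 1 := by omega
            have hne : ¬((⟨t, htL⟩ : Fin (L'+1)) = m) := by
              intro hc
              simp only [Fin.ext_iff, Fin.val_mk] at hc
              omega
            simp only [PF, Matrix.of_apply, if_pos hm, if_pos h1, if_neg hne]
            rw [if_pos (by constructor <;> omega : m.val < t ∧ t < t + 1)]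
            ring
          · have hm2 : ¬(m.val < t) := by omega
            have hmeq : m = (⟨t, htL⟩ : Fin (L'+1)) := by
              simp only [Fin.ext_iff, Fin.val_mk]
              simpa using hm
            have hz : PF K' B L' t (Sum.inl ()) (Sum.inr (m, v)) = 0 := by
              simp [PF, hm2]
            rw [hz, mul_zero, zero_add]
            have hval : ∀ v₁ : Fin K', B u.succ v₁.succ * PF K' B L' t (Sum.inr ((⟨t, htL⟩ : Fin (L'+1)), v₁)) (Sum.inr (m, v))
                = if v₁ = v then B u.succ v₁.succ else 0 := by
              intro v₁
              simp only [PF, Matrix.of_apply, if_neg hm2]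
              by_cases hv : v₁ = v
              · rw [if_pos ⟨hmeq.symm, hv⟩, if_pos hv, mul_one]
              · rw [if_neg (by tauto), if_neg hv, mul_zero]
            rw [Finset.sum_congr rfl (fun v₁ _ => hval v₁), Finset.sum_ite_eq' Finset.univ v _]
            have h1 : m.val < t + 1 := by omega
            simp only [PF, Matrix.of_apply, if_pos h1, if_pos hmeq.symm]
            simp
          · have hm2 : ¬(m.val < t) := by omega
            have hm3 : ¬(m.val < t + 1) := by omega
            have hne : ¬((⟨t, htL⟩ : Fin (L'+1)) = m) := by
              intro hc
              simp only [Fin.ext_iff, Fin.val_mk] at hc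
              omega
            have hz : PF K' B L' t (Sum.inl ()) (Sum.inr (m, v)) = 0 := by
              simp [PF, hm2]
            have hz2 : ∀ v₁ : Fin K', B u.succ v₁.succ * PF K' B L' t (Sum.inr ((⟨t, htL⟩ : Fin (L'+1)), v₁)) (Sum.inr (m, v)) = 0 := by
              intro v₁
              simp only [PF, Matrix.of_apply, if_neg hm2]
              rw [if_neg (by tauto), mul_zero]
            rw [hz, mul_zero, zero_add, Finset.sum_congr rfl (fun v₁ _ => hz2 v₁),
              Finset.sum_const_zero]
            simp only [PF, Matrix.of_apply, if_neg hm3]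
            rw [if_neg (by rintro ⟨hc, -⟩; exact hne hc)]
      · -- ℓ ≠ gate index: identity row
        have hsum1 : (∑ u_1 : Unit, gateF K' B L' ⟨t, htL⟩ (Sum.inr (ℓ, u)) (Sum.inl u_1)
            * PF K' B L' t (Sum.inl u_1) w) = 0 := by
          simp [gateF, hℓ]
        have hrow : ∀ y : Fin (L'+1) × Fin K',
            gateF K' B L' ⟨t, htL⟩ (Sum.inr (ℓ, u)) (Sum.inr y) * PF K' B L' t (Sum.inr y) w
            = if y = (ℓ, u) then PF K' B L' t (Sum.inr y) w else 0 := by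
          rintro ⟨m₁, v₁⟩
          simp only [gateF, Matrix.of_apply, if_neg hℓ, Prod.ext_iff]
          by_cases hc : ℓ = m₁ ∧ u = v₁
          · rw [if_pos hc, if_pos ⟨hc.1.symm, hc.2.symm⟩, one_mul]
          · rw [if_neg hc, if_neg (by tauto), zero_mul]
        rw [hsum1, zero_add, Finset.sum_congr rfl (fun y _ => hrow y),
          Finset.sum_ite_eq' Finset.univ (ℓ, u) _]
        rw [if_pos (Finset.mem_univ _)]
        have hℓv : ℓ.val ≠ t := by
          intro hc
          exact hℓ (by rw [Fin.ext_iff]; simpa using hc)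
        rcases w with t₂ | ⟨m, v⟩
        · simp only [PF, Matrix.of_apply]
          by_cases h1 : ℓ.val < t
          · rw [if_pos h1, if_pos (by omega : ℓ.val < t + 1)]
          · rw [if_neg h1, if_neg (by omega : ¬(ℓ.val < t + 1))]
        · simp only [PF, Matrix.of_apply]
          rcases Nat.lt_trichotomy m.val t with hm | hm | hm
          · rw [if_pos hm, if_pos (by omega : m.val < t + 1)]
            by_cases h2 : ℓ = m
            · rw [if_pos h2, if_pos h2]
            · rw [if_neg h2, if_neg h2]
              by_cases h3 : m.val < ℓ.val ∧ ℓ.val < t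
              · rw [if_pos h3, if_pos ⟨h3.1, by omega⟩]
              · rw [if_neg h3, if_neg (by omega)]
          · have hnm : ¬(m.val < t) := by omega
            have hne2 : ℓ ≠ m := by
              intro hc
              simp only [Fin.ext_iff, Fin.val_mk] at hc
              omega
            rw [if_neg hnm, if_pos (by omega : m.val < t + 1)]
            rw [if_neg (by rintro ⟨hc, -⟩; exact hne2 hc), if_neg hne2,
              if_neg (by omega)]
          · have hnm : ¬(m.val < t) := by omega
            have hnm2 : ¬(m.val < t + 1) := by omega
            rw [if_neg hnm, if_neg hnm2]

/-- the full gadget matrix. -/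
def Vg : Matrix (Unit ⊕ (Fin (L'+1) × Fin K')) (Unit ⊕ (Fin (L'+1) × Fin K')) ℤ :=
  PF K' B L' (L'+1)

lemma Vg_inl_inl (t t' : Unit) : Vg K' B L' (Sum.inl t) (Sum.inl t') = (B 0 0)^(L'+1) := rfl

lemma Vg_inl_inr (t : Unit) (m : Fin (L'+1)) (v : Fin K') :
    Vg K' B L' (Sum.inl t) (Sum.inr (m, v)) = (B 0 0)^(L' - m.val) * B 0 v.succ := by
  have h1 : m.val < L'+1 := m.isLt
  have h2 : L' + 1 - 1 - m.val = L' - m.val := by omega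
  simp only [Vg, PF, Matrix.of_apply, if_pos h1, h2]

lemma Vg_inr_inl (ℓ : Fin (L'+1)) (u : Fin K') (t : Unit) :
    Vg K' B L' (Sum.inr (ℓ, u)) (Sum.inl t) = (B 0 0)^(ℓ.val) * B u.succ 0 := by
  have h1 : ℓ.val < L'+1 := ℓ.isLt
  simp only [Vg, PF, Matrix.of_apply, if_pos h1]

lemma Vg_inr_inr (ℓ : Fin (L'+1)) (u : Fin K') (m : Fin (L'+1)) (v : Fin K') :
    Vg K' B L' (Sum.inr (ℓ, u)) (Sum.inr (m, v)) =
      if ℓ = m then B u.succ v.succ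
      else if m.val < ℓ.val then (B 0 0)^(ℓ.val - 1 - m.val) * (B u.succ 0 * B 0 v.succ)
      else 0 := by
  have h1 : m.val < L'+1 := m.isLt
  have h2 : ℓ.val < L'+1 := ℓ.isLt
  simp only [Vg, PF, Matrix.of_apply, if_pos h1]
  by_cases hc : ℓ = m
  · rw [if_pos hc, if_pos hc]
  · rw [if_neg hc, if_neg hc]
    by_cases hc2 : m.val < ℓ.val
    · rw [if_pos ⟨hc2, h2⟩, if_pos hc2]
    · rw [if_neg (by tauto), if_neg hc2]

/-- hub component of the powers. -/
def xg (n : ℕ) : ℤ := ((Vg K' B L')^n) (Sum.inl ()) (Sum.inl ())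

def yg (n : ℕ) (z : Fin (L'+1) × Fin K') : ℤ := ((Vg K' B L')^n) (Sum.inr z) (Sum.inl ())

def Yg (n : ℕ) : ℤ := ∑ z : Fin (L'+1) × Fin K', |B 0 0|^(L' - z.1.val) * |yg K' B L' n z|

lemma xg_succ (n : ℕ) :
    xg K' B L' (n+1) = (B 0 0)^(L'+1) * xg K' B L' n
      + ∑ z : Fin (L'+1) × Fin K',
          ((B 0 0)^(L' - z.1.val) * B 0 z.2.succ) * yg K' B L' n z := by
  have h : ((Vg K' B L')^(n+1)) = Vg K' B L' * (Vg K' B L')^n := by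
    rw [pow_succ']
  rw [xg, h, Matrix.mul_apply, Fintype.sum_sum_type]
  congr 1
  · simp only [Fintype.sum_unique]
    rw [Vg_inl_inl]
    rfl
  · apply Finset.sum_congr rfl
    rintro ⟨m, v⟩ -
    rw [Vg_inl_inr]
    rfl

lemma yg_succ (n : ℕ) (ℓ : Fin (L'+1)) (u : Fin K') :
    yg K' B L' (n+1) (ℓ, u) = ((B 0 0)^(ℓ.val) * B u.succ 0) * xg K' B L' n
      + ∑ z : Fin (L'+1) × Fin K',
          (Vg K' B L') (Sum.inr (ℓ, u)) (Sum.inr z) * yg K' B L' n z := by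
  have h : ((Vg K' B L')^(n+1)) = Vg K' B L' * (Vg K' B L')^n := by
    rw [pow_succ']
  rw [yg, h, Matrix.mul_apply, Fintype.sum_sum_type]
  congr 1
  simp only [Fintype.sum_unique]
  rw [Vg_inr_inl]
  rfl

section Dyn

lemma q_pow_pos (hp : 2 ≤ |B 0 0|) (j : ℕ) : (0:ℤ) < |B 0 0|^j :=
  pow_pos (by linarith) j

lemma p_pow_eq (hEven : Even (L'+1)) : (B 0 0)^(L'+1) = |B 0 0|^(L'+1) :=
  (Even.pow_abs hEven _).symm

lemma p_pow_big (hp : 2 ≤ |B 0 0|) (hEven : Even (L'+1)) : (4:ℤ) ≤ (B 0 0)^(L'+1) := by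
  rw [p_pow_eq K' B L' hEven]
  calc (4:ℤ) = 2^2 := by norm_num
  _ ≤ 2^(L'+1) := by
      apply pow_le_pow_right₀ (by norm_num)
      rcases hEven with ⟨w, hw⟩
      omega
  _ ≤ |B 0 0|^(L'+1) := pow_le_pow_left₀ (by norm_num) hp _

/-- single-step bounds packaged as the inductive invariant. -/
lemma invariant_step (hp : 2 ≤ |B 0 0|) (N : ℤ) (hN : 1 ≤ N)
    (hNb : ∀ a b, |B a b| ≤ N) (hEven : Even (L'+1))
    (hbig : 4*(K' : ℤ)*(((L'+1 : ℕ)) : ℤ)*N^2 ≤ |B 0 0|^(L'+1))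
    (n : ℕ) (h1 : 1 ≤ xg K' B L' n)
    (h2 : 2*N*Yg K' B L' n ≤ (B 0 0)^(L'+1) * xg K' B L' n) :
    (1 ≤ xg K' B L' (n+1) ∧ 2*N*Yg K' B L' (n+1) ≤ (B 0 0)^(L'+1) * xg K' B L' (n+1))
      ∧ 2 * xg K' B L' n ≤ xg K' B L' (n+1) := by
  set p := B 0 0 with hpd
  set q := |B 0 0| with hqd
  set L : ℕ := L'+1 with hLd
  have hq2 : (2:ℤ) ≤ q := hp
  have hq0 : (0:ℤ) < q := by linarith
  have hP4 : (4:ℤ) ≤ p^L := p_pow_big K' B L' hp hEven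
  have hPq : p^L = q^L := p_pow_eq K' B L' hEven
  have hqp : ∀ j, (0:ℤ) ≤ q^j := fun j => le_of_lt (q_pow_pos K' B hp j)
  have hYnn : 0 ≤ Yg K' B L' n := by
    apply Finset.sum_nonneg
    intro z _
    exact mul_nonneg (hqp _) (abs_nonneg _)
  -- the x-step
  have hS : |∑ z : Fin L × Fin K',
      ((p)^(L' - z.1.val) * B 0 z.2.succ) * yg K' B L' n z| ≤ N * Yg K' B L' n := by
    calc |∑ z : Fin L × Fin K', ((p)^(L' - z.1.val) * B 0 z.2.succ) * yg K' B L' n z|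
        ≤ ∑ z : Fin L × Fin K', |((p)^(L' - z.1.val) * B 0 z.2.succ) * yg K' B L' n z| :=
          Finset.abs_sum_le_sum_abs _ _
      _ ≤ ∑ z : Fin L × Fin K', N * (q^(L' - z.1.val) * |yg K' B L' n z|) := by
          apply Finset.sum_le_sum
          intro z _
          rw [abs_mul, abs_mul, abs_pow]
          have hb : |B 0 z.2.succ| ≤ N := hNb _ _
          have h3 : (0:ℤ) ≤ |yg K' B L' n z| := abs_nonneg _
          have h4 : (0:ℤ) ≤ q^(L' - z.1.val) := hqp _
          calc q^(L' - z.1.val) * |B 0 z.2.succ| * |yg K' B L' n z|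
              ≤ q^(L' - z.1.val) * N * |yg K' B L' n z| := by
                apply mul_le_mul_of_nonneg_right _ h3
                exact mul_le_mul_of_nonneg_left hb h4
            _ = N * (q^(L' - z.1.val) * |yg K' B L' n z|) := by ring
      _ = N * Yg K' B L' n := by
          rw [Yg, Finset.mul_sum]
  have hxs := xg_succ K' B L' n
  have hxnn : (0:ℤ) ≤ xg K' B L' n := by linarith
  have hPx : p^L * xg K' B L' n ≤ 2 * xg K' B L' (n+1) := by
    have h5 : p^L * xg K' B L' n - N * Yg K' B L' n ≤ xg K' B L' (n+1) := by
      rw [hxs]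
      have h6 : -(N * Yg K' B L' n) ≤ ∑ z : Fin L × Fin K',
          ((p)^(L' - z.1.val) * B 0 z.2.succ) * yg K' B L' n z := by
        have := neg_abs_le (∑ z : Fin L × Fin K',
          ((p)^(L' - z.1.val) * B 0 z.2.succ) * yg K' B L' n z)
        linarith [hS]
      linarith
    linarith [h2]
  have hdouble : 2 * xg K' B L' n ≤ xg K' B L' (n+1) := by
    nlinarith [hPx, hP4, h1]
  have hx1 : 1 ≤ xg K' B L' (n+1) := by linarith
  refine ⟨⟨hx1, ?_⟩, hdouble⟩
  -- entry bound
  have hentry : ∀ (ℓ m : Fin L) (u v : Fin K'),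
      q^(L' - ℓ.val) * |Vg K' B L' (Sum.inr (ℓ, u)) (Sum.inr (m, v))|
        ≤ N^2 * q^(L' - m.val) := by
    intro ℓ m u v
    rw [Vg_inr_inr]
    have hNN : N ≤ N^2 := by nlinarith
    by_cases hc : ℓ = m
    · subst hc
      rw [if_pos rfl]
      calc q^(L' - ℓ.val) * |B u.succ v.succ| ≤ q^(L' - ℓ.val) * N :=
            mul_le_mul_of_nonneg_left (hNb _ _) (hqp _)
        _ ≤ q^(L' - ℓ.val) * N^2 := mul_le_mul_of_nonneg_left hNN (hqp _)
        _ = N^2 * q^(L' - ℓ.val) := by ring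
    · rw [if_neg hc]
      by_cases hc2 : m.val < ℓ.val
      · rw [if_pos hc2]
        have hll : ℓ.val ≤ L' := by
          have := ℓ.isLt
          omega
        have hexp : (L' - ℓ.val) + (ℓ.val - 1 - m.val) = L' - 1 - m.val := by omega
        have hcc : |B u.succ 0| * |B 0 v.succ| ≤ N^2 := by
          have h7 := hNb u.succ 0
          have h8 := hNb 0 v.succ
          have h9 := abs_nonneg (B u.succ 0)
          have h10 := abs_nonneg (B 0 v.succ)
          nlinarith
        have hmono : q^(L' - 1 - m.val) ≤ q^(L' - m.val) := by
          apply pow_le_pow_right₀ (by linarith)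
          omega
        rw [abs_mul, abs_mul, abs_pow]
        calc q^(L' - ℓ.val) * (q^(ℓ.val - 1 - m.val) * (|B u.succ 0| * |B 0 v.succ|))
            = q^(L' - 1 - m.val) * (|B u.succ 0| * |B 0 v.succ|) := by
              rw [← mul_assoc, ← pow_add, hexp]
          _ ≤ q^(L' - 1 - m.val) * N^2 := mul_le_mul_of_nonneg_left hcc (hqp _)
          _ ≤ q^(L' - m.val) * N^2 := by
              apply mul_le_mul_of_nonneg_right hmono
              nlinarith
          _ = N^2 * q^(L' - m.val) := by ring
      · rw [if_neg hc2]
        simp only [abs_zero, mul_zero]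
        positivity
  have hYs : Yg K' B L' (n+1) ≤ ((L:ℤ)*K') * (N * q^(L') * xg K' B L' n)
      + ((L:ℤ)*K') * (N^2 * Yg K' B L' n) := by
    have hzb : ∀ z : Fin L × Fin K',
        q^(L' - z.1.val) * |yg K' B L' (n+1) z|
          ≤ N * q^(L') * xg K' B L' n + N^2 * Yg K' B L' n := by
      rintro ⟨ℓ, u⟩
      rw [yg_succ]
      calc q^(L' - ℓ.val) * |((p)^(ℓ.val) * B u.succ 0) * xg K' B L' n
            + ∑ z : Fin L × Fin K', (Vg K' B L') (Sum.inr (ℓ, u)) (Sum.inr z) * yg K' B L' n z|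
          ≤ q^(L' - ℓ.val) * (|((p)^(ℓ.val) * B u.succ 0) * xg K' B L' n|
            + |∑ z : Fin L × Fin K', (Vg K' B L') (Sum.inr (ℓ, u)) (Sum.inr z) * yg K' B L' n z|) := by
            apply mul_le_mul_of_nonneg_left (abs_add_le _ _) (hqp _)
        _ ≤ N * q^(L') * xg K' B L' n + N^2 * Yg K' B L' n := by
            have hterm1 : q^(L' - ℓ.val) * |((p)^(ℓ.val) * B u.succ 0) * xg K' B L' n|
                ≤ N * q^(L') * xg K' B L' n := by
              rw [abs_mul, abs_mul, abs_pow, abs_of_nonneg hxnn]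
              have hll : ℓ.val ≤ L' := by
                have := ℓ.isLt
                omega
              have hexp : (L' - ℓ.val) + ℓ.val = L' := by omega
              calc q^(L' - ℓ.val) * (q^(ℓ.val) * |B u.succ 0| * xg K' B L' n)
                  = (q^(L' - ℓ.val) * q^(ℓ.val)) * (|B u.succ 0| * xg K' B L' n) := by ring
                _ = q^(L') * (|B u.succ 0| * xg K' B L' n) := by rw [← pow_add, hexp]
                _ ≤ q^(L') * (N * xg K' B L' n) := by
                    apply mul_le_mul_of_nonneg_left _ (hqp _)
                    exact mul_le_mul_of_nonneg_right (hNb _ _) hxnn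
                _ = N * q^(L') * xg K' B L' n := by ring
            have hterm2 : q^(L' - ℓ.val) * |∑ z : Fin L × Fin K',
                (Vg K' B L') (Sum.inr (ℓ, u)) (Sum.inr z) * yg K' B L' n z|
                ≤ N^2 * Yg K' B L' n := by
              calc q^(L' - ℓ.val) * |∑ z : Fin L × Fin K',
                  (Vg K' B L') (Sum.inr (ℓ, u)) (Sum.inr z) * yg K' B L' n z|
                  ≤ q^(L' - ℓ.val) * ∑ z : Fin L × Fin K',
                    |(Vg K' B L') (Sum.inr (ℓ, u)) (Sum.inr z)| * |yg K' B L' n z| := by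
                    apply mul_le_mul_of_nonneg_left _ (hqp _)
                    calc |∑ z : Fin L × Fin K', (Vg K' B L') (Sum.inr (ℓ, u)) (Sum.inr z) * yg K' B L' n z|
                        ≤ ∑ z : Fin L × Fin K', |(Vg K' B L') (Sum.inr (ℓ, u)) (Sum.inr z) * yg K' B L' n z| :=
                          Finset.abs_sum_le_sum_abs _ _
                      _ = ∑ z : Fin L × Fin K', |(Vg K' B L') (Sum.inr (ℓ, u)) (Sum.inr z)| * |yg K' B L' n z| := by
                          apply Finset.sum_congr rfl
                          intro z _
                          rw [abs_mul]
                _ = ∑ z : Fin L × Fin K', (q^(L' - ℓ.val) * |(Vg K' B L') (Sum.inr (ℓ, u)) (Sum.inr z)|) * |yg K' B L' n z| := by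
                    rw [Finset.mul_sum]
                    apply Finset.sum_congr rfl
                    intro z _
                    ring
                _ ≤ ∑ z : Fin L × Fin K', (N^2 * q^(L' - z.1.val)) * |yg K' B L' n z| := by
                    apply Finset.sum_le_sum
                    rintro ⟨m, v⟩ -
                    exact mul_le_mul_of_nonneg_right (hentry ℓ m u v) (abs_nonneg _)
                _ = N^2 * Yg K' B L' n := by
                    rw [Yg, Finset.mul_sum]
                    apply Finset.sum_congr rfl
                    intro z _
                    ring
            rw [mul_add]
            exact add_le_add hterm1 hterm2
    calc Yg K' B L' (n+1) = ∑ z : Fin L × Fin K', q^(L' - z.1.val) * |yg K' B L' (n+1) z| := rfl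
      _ ≤ ∑ _z : Fin L × Fin K', (N * q^(L') * xg K' B L' n + N^2 * Yg K' B L' n) :=
          Finset.sum_le_sum (fun z _ => hzb z)
      _ = ((L:ℤ)*K') * (N * q^(L') * xg K' B L' n) + ((L:ℤ)*K') * (N^2 * Yg K' B L' n) := by
          rw [Finset.sum_const, Finset.card_univ, Fintype.card_prod, Fintype.card_fin,
            Fintype.card_fin]
          push_cast
          ring
  -- conclude the invariant for n+1
  have hq1 : q^(L') * 2 ≤ q^L := by
    have h30 : q^L = q^(L') * q := by rw [hLd, pow_succ]
    rw [h30]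
    apply mul_le_mul_of_nonneg_left hq2 (hqp _)
  have hcalc : 2*N*Yg K' B L' (n+1) ≤ 2*(L:ℤ)*K'*N^2 * (p^L * xg K' B L' n) := by
    have hNpos : (0:ℤ) < N := by linarith
    have h21 : 2*N*Yg K' B L' (n+1)
        ≤ 2*N*(((L:ℤ)*K') * (N * q^(L') * xg K' B L' n) + ((L:ℤ)*K') * (N^2 * Yg K' B L' n)) := by
      apply mul_le_mul_of_nonneg_left hYs
      linarith
    have h22 : 2*N*(((L:ℤ)*K') * (N * q^(L') * xg K' B L' n) + ((L:ℤ)*K') * (N^2 * Yg K' B L' n))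
        = ((L:ℤ)*K'*N^2) * (2 * q^(L') * xg K' B L' n) + ((L:ℤ)*K'*N^2) * (2*N*Yg K' B L' n) := by
      ring
    have h23 : ((L:ℤ)*K'*N^2) * (2 * q^(L') * xg K' B L' n)
        ≤ ((L:ℤ)*K'*N^2) * (p^L * xg K' B L' n) := by
      apply mul_le_mul_of_nonneg_left _ (by positivity)
      rw [hPq]
      calc 2 * q^(L') * xg K' B L' n = (q^(L') * 2) * xg K' B L' n := by ring
        _ ≤ q^L * xg K' B L' n := mul_le_mul_of_nonneg_right hq1 hxnn
    have h24 : ((L:ℤ)*K'*N^2) * (2*N*Yg K' B L' n) ≤ ((L:ℤ)*K'*N^2) * (p^L * xg K' B L' n) := by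
      apply mul_le_mul_of_nonneg_left h2 (by positivity)
    calc 2*N*Yg K' B L' (n+1) ≤ _ := h21
      _ = _ := h22
      _ ≤ ((L:ℤ)*K'*N^2) * (p^L * xg K' B L' n) + ((L:ℤ)*K'*N^2) * (p^L * xg K' B L' n) :=
          add_le_add h23 h24
      _ = 2*(L:ℤ)*K'*N^2 * (p^L * xg K' B L' n) := by ring
  have hbig2 : 4*(K':ℤ)*(L:ℤ)*N^2 ≤ p^L := by
    rw [hPq]
    exact_mod_cast hbig
  have hfinal : 2*(2*N*Yg K' B L' (n+1)) ≤ 2*((p^L) * xg K' B L' (n+1)) := by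
    have hPxnn : (0:ℤ) ≤ p^L * xg K' B L' n := by positivity
    calc 2*(2*N*Yg K' B L' (n+1)) ≤ 2*(2*(L:ℤ)*K'*N^2 * (p^L * xg K' B L' n)) := by
          linarith [hcalc]
      _ = (4*(K':ℤ)*(L:ℤ)*N^2) * (p^L * xg K' B L' n) := by ring
      _ ≤ p^L * (p^L * xg K' B L' n) := mul_le_mul_of_nonneg_right hbig2 hPxnn
      _ ≤ p^L * (2 * xg K' B L' (n+1)) := by
          apply mul_le_mul_of_nonneg_left hPx (by linarith)
      _ = 2*((p^L) * xg K' B L' (n+1)) := by ring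
  linarith

end Dyn

lemma Wmat_cmem (hB : B ∈ C.carrier (K'+1)) (hK' : 0 < K') (hL' : 0 < L') (t : ℕ) :
    CMem C (Wmat K' B L' t) := by
  induction t with
  | zero =>
    have : Nonempty (Unit ⊕ (Fin (L'+1) × Fin K')) := ⟨Sum.inl ()⟩
    exact CMem.one C
  | succ t ih =>
    rw [show Wmat K' B L' (t+1)
        = (if h : t < L'+1 then gateF K' B L' ⟨t, h⟩ else 1) * Wmat K' B L' t from rfl]
    by_cases h : t < L'+1
    · rw [dif_pos h]
      exact CMem.mul C (gate_cmem C K' B L' hB hK' hL' _) ih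
    · rw [dif_neg h, one_mul]
      exact ih

lemma Vg_cmem (hB : B ∈ C.carrier (K'+1)) (hK' : 0 < K') (hL' : 0 < L') :
    CMem C (Vg K' B L') := by
  have h := Wmat_cmem C K' B L' hB hK' hL' (L'+1)
  rwa [Wform K' B L' (L'+1) (le_refl _)] at h

end Gadget

lemma choose_L (a : ℕ) : ∃ L' : ℕ, 0 < L' ∧ Even (L'+1) ∧ a * (L'+1) ≤ 2^(L'+1) := by
  refine ⟨2^(a+2) - 1, ?_, ?_, ?_⟩
  · have : 4 ≤ 2^(a+2) := by
      calc 4 = 2^2 := by norm_num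
      _ ≤ 2^(a+2) := Nat.pow_le_pow_right (by norm_num) (by omega)
    omega
  · have h4 : 4 ≤ 2^(a+2) := by
      calc 4 = 2^2 := by norm_num
      _ ≤ 2^(a+2) := Nat.pow_le_pow_right (by norm_num) (by omega)
    have : 2^(a+2) - 1 + 1 = 2^(a+2) := by omega
    rw [this]
    exact ⟨2^(a+1), by rw [← two_mul, ← pow_succ']⟩
  · have h4 : 4 ≤ 2^(a+2) := by
      calc 4 = 2^2 := by norm_num
      _ ≤ 2^(a+2) := Nat.pow_le_pow_right (by norm_num) (by omega)
    have heq : 2^(a+2) - 1 + 1 = 2^(a+2) := by omega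
    rw [heq]
    have h1 : a ≤ 2^a := le_of_lt (Nat.lt_two_pow_self (n := a))
    have h2 : 2*a+2 ≤ 2^(a+2) := by
      have := Nat.lt_two_pow_self (n := a+1)
      have h3 : 2*(a+1) ≤ 2*2^(a+1) := by omega
      calc 2*a+2 = 2*(a+1) := by ring
      _ ≤ 2*2^(a+1) := h3
      _ = 2^(a+2) := by rw [← pow_succ']
    calc a * 2^(a+2) ≤ 2^a * 2^(a+2) := Nat.mul_le_mul_right _ h1
    _ = 2^(2*a+2) := by rw [← pow_add]; congr 1; ring
    _ ≤ 2^(2^(a+2)) := Nat.pow_le_pow_right (by norm_num) h2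

lemma reindex_pow {ι κ : Type} [Fintype ι] [DecidableEq ι] [Fintype κ] [DecidableEq κ]
    (e : ι ≃ κ) (M : Matrix ι ι ℤ) (j : ℕ) :
    (Matrix.reindex e e M)^j = Matrix.reindex e e (M^j) := by
  induction j with
  | zero =>
    simp only [pow_zero, Matrix.reindex_apply, Matrix.submatrix_one_equiv]
  | succ j ih =>
    rw [pow_succ, pow_succ, ih]
    simp only [Matrix.reindex_apply]
    exact Matrix.submatrix_mul_equiv (M^j) M _ e.symm _

lemma extMat_zero_zero {K : ℕ} (hK : 0 < K) (B : Matrix (Fin K) (Fin K) ℤ) :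
    extMat B 1 ⟨0, by omega⟩ ⟨0, by omega⟩ = B ⟨0, hK⟩ ⟨0, hK⟩ := by
  unfold extMat
  rw [Matrix.reindex_apply, Matrix.submatrix_apply]
  have h0 : finSumFinEquiv.symm (⟨0, by omega⟩ : Fin (K + 1)) = Sum.inl (⟨0, hK⟩ : Fin K) := by
    rw [Equiv.symm_apply_eq]
    simp [finSumFinEquiv]
  rw [h0]
  rfl

/-- The main gadget conclusion: from a matrix with big upper-left entry,
a doubling matrix. -/
lemma gadget_main {K' : ℕ} (hK' : 0 < K') (B : Matrix (Fin (K'+1)) (Fin (K'+1)) ℤ)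
    (hB : B ∈ C.carrier (K'+1)) (hp : 2 ≤ |B 0 0|) :
    ∃ (d : ℕ) (hd : 0 < d) (M : Matrix (Fin d) (Fin d) ℤ), M ∈ C.carrier d ∧
      ∀ n : ℕ, 2 * (M^n) ⟨0, hd⟩ ⟨0, hd⟩ ≤ (M^(n+1)) ⟨0, hd⟩ ⟨0, hd⟩ := by
  classical
  -- the entry bound
  set Nn : ℕ := 1 + ∑ a : Fin (K'+1), ∑ b : Fin (K'+1), (B a b).natAbs with hNn
  set N : ℤ := (Nn : ℤ) with hNdef
  have hN1 : 1 ≤ N := by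
    rw [hNdef]
    exact_mod_cast Nat.le_add_right 1 _
  have hNb : ∀ a b, |B a b| ≤ N := by
    intro a b
    have h1 : (B a b).natAbs ≤ ∑ b' : Fin (K'+1), (B a b').natAbs :=
      Finset.single_le_sum (f := fun b' => (B a b').natAbs)
        (fun _ _ => Nat.zero_le _) (Finset.mem_univ b)
    have h2 : (∑ b' : Fin (K'+1), (B a b').natAbs)
        ≤ ∑ a' : Fin (K'+1), ∑ b' : Fin (K'+1), (B a' b').natAbs :=
      Finset.single_le_sum (f := fun a' => ∑ b' : Fin (K'+1), (B a' b').natAbs)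
        (fun _ _ => Nat.zero_le _) (Finset.mem_univ a)
    have h4 : (B a b).natAbs ≤ Nn := by
      rw [hNn]
      omega
    calc |B a b| = ((B a b).natAbs : ℤ) := Int.abs_eq_natAbs _
      _ ≤ N := by rw [hNdef]; exact_mod_cast h4
  -- choose L'
  obtain ⟨L', hL', hEven, hLbig⟩ := choose_L (4 * K' * Nn^2)
  have hbig : 4*(K' : ℤ)*(((L'+1 : ℕ)) : ℤ)*N^2 ≤ |B 0 0|^(L'+1) := by
    have h2L : ((4 * K' * Nn^2) * (L'+1) : ℕ) ≤ 2^(L'+1) := hLbig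
    have h2q : (2:ℤ)^(L'+1) ≤ |B 0 0|^(L'+1) := pow_le_pow_left₀ (by norm_num) hp _
    calc 4*(K' : ℤ)*(((L'+1 : ℕ)) : ℤ)*N^2 = (((4 * K' * Nn^2) * (L'+1) : ℕ) : ℤ) := by
          rw [hNdef]
          push_cast
          ring
      _ ≤ ((2^(L'+1) : ℕ) : ℤ) := by exact_mod_cast h2L
      _ = (2:ℤ)^(L'+1) := by push_cast; rfl
      _ ≤ |B 0 0|^(L'+1) := h2q
  -- the invariant for all n
  have hInv : ∀ n, (1 ≤ xg K' B L' n ∧ 2*N*Yg K' B L' n ≤ (B 0 0)^(L'+1) * xg K' B L' n) := by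
    intro n
    induction n with
    | zero =>
      constructor
      · rw [xg, pow_zero, Matrix.one_apply_eq]
      · have hY0 : Yg K' B L' 0 = 0 := by
          rw [Yg]
          apply Finset.sum_eq_zero
          intro z _
          rw [yg, pow_zero]
          rw [Matrix.one_apply_ne (by simp)]
          simp
        rw [hY0, xg, pow_zero, Matrix.one_apply_eq, mul_zero, mul_one]
        have := p_pow_big K' B L' hp hEven
        linarith
    | succ n ih =>
      exact (invariant_step K' B L' hp N hN1 hNb hEven hbig n ih.1 ih.2).1
  have hdouble : ∀ n, 2 * xg K' B L' n ≤ xg K' B L' (n+1) := by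
    intro n
    exact (invariant_step K' B L' hp N hN1 hNb hEven hbig n (hInv n).1 (hInv n).2).2
  -- membership and transport to Fin d
  obtain ⟨d, e, he⟩ := Vg_cmem C K' B L' hB hK' hL'
  have hd : 0 < d := by
    have : Nonempty (Fin d) := ⟨e (Sum.inl ())⟩
    exact Fin.pos (e (Sum.inl ()))
  set σ : Equiv.Perm (Fin d) := Equiv.swap (e (Sum.inl ())) ⟨0, hd⟩ with hσ
  set f := e.trans σ with hf
  refine ⟨d, hd, Matrix.reindex f f (Vg K' B L'), ?_, ?_⟩
  · rw [hf, ← reindex_comp]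
    exact mem_reindex C he σ
  · intro n
    have hfs : f.symm ⟨0, hd⟩ = Sum.inl () := by
      rw [hf]
      simp only [Equiv.symm_trans_apply]
      rw [hσ, Equiv.symm_swap, Equiv.swap_apply_right, Equiv.symm_apply_apply]
    have hent : ∀ j : ℕ, ((Matrix.reindex f f (Vg K' B L'))^j) ⟨0, hd⟩ ⟨0, hd⟩
        = xg K' B L' j := by
      intro j
      rw [reindex_pow, Matrix.reindex_apply, Matrix.submatrix_apply, hfs]
      rfl
    rw [hent n, hent (n+1)]
    exact hdouble n

end Doubling


theorem class_doubling_matrix (C : MatrixClass)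
    (h : ∃ (k : ℕ) (A : Matrix (Fin k) (Fin k) ℤ), A ∈ C.carrier k ∧
      ∃ (i j : Fin k), 2 ≤ |A i j|) :
    ∃ (d : ℕ) (hd : 0 < d) (M : Matrix (Fin d) (Fin d) ℤ), M ∈ C.carrier d ∧
      ∀ n : ℕ,
        2 * ((M ^ n).mulVec (Pi.single (⟨0, hd⟩ : Fin d) (1 : ℤ))) ⟨0, hd⟩ ≤
          ((M ^ (n + 1)).mulVec (Pi.single (⟨0, hd⟩ : Fin d) (1 : ℤ))) ⟨0, hd⟩ := by
  classical
  obtain ⟨K, hK, B, hB, hBe⟩ := Doubling.exists_bigdiag C h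
  -- pad to size K + 1 so that the gadget applies
  have hBmem' : extMat B 1 ∈ C.carrier (K + 1) := C.ext_mem B hB 1 (le_refl 1)
  have hzero : (0 : Fin (K+1)) = ⟨0, by omega⟩ := by
    apply Fin.ext
    simp
  have hp : 2 ≤ |extMat B 1 0 0| := by
    rw [hzero, Doubling.extMat_zero_zero hK B]
    exact hBe
  obtain ⟨d, hd, M, hM, hdouble⟩ := Doubling.gadget_main C hK (extMat B 1) hBmem' hp
  refine ⟨d, hd, M, hM, ?_⟩
  intro n
  have hv : ∀ j : ℕ, ((M ^ j).mulVec (Pi.single (⟨0, hd⟩ : Fin d) (1 : ℤ))) ⟨0, hd⟩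
      = (M ^ j) ⟨0, hd⟩ ⟨0, hd⟩ := by
    intro j
    rw [Matrix.mulVec_single]
    exact mul_one _
  rw [hv, hv]
  exact hdouble n
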